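/- Let J : ℝ → ℝ be a nonnegative integrable kernel with ∫ J = 1, and let ṽ : [t₀,∞) × ℝ → ℝ be continuous, differentiable in t, nonpositive, and satisfy ṽ_t(t,x) ≤ (J ∗ ṽ(t,·))(x) for all t > t₀ and x ∈ ℝ. Then for every t ≥ t₀ and x ∈ ℝ, ṽ(t,x) ≤ (t − t₀)·(J ∗ ṽ(t₀,·))(x) + ṽ(t₀,x), and in particular ṽ(t,x) ≤ (t − t₀)·(J ∗ ṽ(t₀,·))(x). -/

import Mathlib

open MeasureTheory Real

lemma deriv_bound_aux (f f' : ℝ → ℝ) (a C : ℝ)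
    (hf : ContinuousOn f (Set.Ici a))
    (hd : ∀ t > a, HasDerivAt f (f' t) t)
    (hb : ∀ t > a, f' t ≤ C) : ∀ t ≥ a, f t ≤ f a + C * (t - a) := by
  intro t ht
  set g := fun s => C * s - f s with hg
  have hgd : ∀ s ∈ interior (Set.Ici a), HasDerivAt g (C - f' s) s := by
    intro s hs
    rw [interior_Ici] at hs
    exact (((hasDerivAt_id s).const_mul C).sub (hd s hs)).congr_deriv (by ring)
  have hmono : MonotoneOn g (Set.Ici a) := by
    apply monotoneOn_of_deriv_nonneg (convex_Ici a)
      ((continuousOn_const.mul continuousOn_id).sub hf)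
      (fun s hs => ((hgd s hs).differentiableAt).differentiableWithinAt)
    intro s hs
    change 0 ≤ deriv g s
    rw [(hgd s hs).deriv]
    rw [interior_Ici] at hs
    linarith [hb s hs]
  have := hmono (Set.self_mem_Ici) (Set.mem_Ici.mpr ht) ht
  simp only [hg] at this
  nlinarith

/-- Gronwall-type integral bound for a nonpositive subsolution of
`ṽ_t ≤ J ∗ ṽ`. -/
theorem stmt0
    (J : ℝ → ℝ) (v dv : ℝ → ℝ → ℝ) (t₀ : ℝ)
    (hJint : Integrable J)
    (hJpos : ∀ x, 0 ≤ J x)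
    (hJ1 : (∫ x, J x) = 1)
    (hvcont : Continuous fun p : ℝ × ℝ => v p.1 p.2)
    (hvle : ∀ t x, t₀ ≤ t → v t x ≤ 0)
    (hvbdd : ∃ B, ∀ t x, |v t x| ≤ B)
    (hvint : ∀ t x, t₀ ≤ t → Integrable fun y => J (x - y) * v t y)
    (hderiv : ∀ x, ∀ t > t₀, HasDerivAt (fun s => v s x) (dv t x) t)
    (hineq : ∀ x, ∀ t > t₀, dv t x ≤ ∫ y, J (x - y) * v t y) :
    ∀ t ≥ t₀, ∀ x,
      v t x ≤ (t - t₀) * (∫ y, J (x - y) * v t₀ y) + v t₀ x ∧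
      v t x ≤ (t - t₀) * (∫ y, J (x - y) * v t₀ y) := by
  have hcontx : ∀ x, ContinuousOn (fun s => v s x) (Set.Ici t₀) := fun x =>
    (hvcont.comp (continuous_id.prodMk continuous_const)).continuousOn
  -- v is nonincreasing in time
  have hmono : ∀ x, ∀ t ≥ t₀, v t x ≤ v t₀ x := by
    intro x t ht
    have := deriv_bound_aux (fun s => v s x) (fun s => dv s x) t₀ 0 (hcontx x)
      (fun s hs => hderiv x s hs)
      (fun s hs => le_trans (hineq x s hs) (integral_nonpos fun y =>
        mul_nonpos_of_nonneg_of_nonpos (hJpos _) (hvle s y hs.le))) t ht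
    simpa using this
  intro t ht x
  have key : v t x ≤ v t₀ x + (∫ y, J (x - y) * v t₀ y) * (t - t₀) := by
    apply deriv_bound_aux (fun s => v s x) (fun s => dv s x) t₀ _ (hcontx x)
      (fun s hs => hderiv x s hs) _ t ht
    intro s hs
    refine le_trans (hineq x s hs) (integral_mono (hvint s x hs.le) (hvint t₀ x le_rfl) ?_)
    intro y
    exact mul_le_mul_of_nonneg_left (hmono y s hs.le) (hJpos _)
  constructor
  · linarith
  · have := hvle t₀ x le_rfl
    linarith
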